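/- For every partizan game G, the misère outcome of G + G° is a previous-player win (P-position): the player to move loses, i.e. neither Left moving first nor Right moving first can win G + G° under misère play. -/
import Mathlib


/-- A (finite) partizan game: finite lists of Left and Right options. -/
inductive Gm : Type where
  | node : List Gm → List Gm → Gm

/-- The Left options of a game. -/
def Gm.leftOpts : Gm → List Gm
  | .node l _ => l

/-- The Right options of a game. -/
def Gm.rightOpts : Gm → List Gm
  | .node _ r => r

/-- Disjunctive sum of games. -/
def Gm.add : Gm → Gm → Gm
  | .node gl gr, .node hl hr =>
      .node
        (gl.attach.map (fun g => Gm.add g.1 (.node hl hr)) ++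
         hl.attach.map (fun h => Gm.add (.node gl gr) h.1))
        (gr.attach.map (fun g => Gm.add g.1 (.node hl hr)) ++
         hr.attach.map (fun h => Gm.add (.node gl gr) h.1))
termination_by g h => sizeOf g + sizeOf h
decreasing_by
  all_goals first
  | (have := List.sizeOf_lt_of_mem g.2; simp; omega)
  | (have := List.sizeOf_lt_of_mem h.2; simp; omega)

mutual
/-- Left, moving first, wins `G` under misère play (a player unable to move wins):
`G` is a Left end, or some Left option is a loss for Right moving first. -/
def Gm.lwins : Gm → Prop
  | .node l _ => l = [] ∨ ∃ g ∈ l.attach, ¬ Gm.rwins g.1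
termination_by G => sizeOf G
decreasing_by have := List.sizeOf_lt_of_mem g.2; simp; omega

/-- Right, moving first, wins `G` under misère play. -/
def Gm.rwins : Gm → Prop
  | .node _ r => r = [] ∨ ∃ g ∈ r.attach, ¬ Gm.lwins g.1
termination_by G => sizeOf G
decreasing_by have := List.sizeOf_lt_of_mem g.2; simp; omega
end

/-- The game `0`. -/
def Gm.zero : Gm := .node [] []

/-- The game `* = {0|0}`. -/
def Gm.star : Gm := .node [Gm.zero] [Gm.zero]

/-- The misère adjoint `G°`. -/
def Gm.adj : Gm → Gm
  | .node [] [] => Gm.star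
  | .node [] (r :: rs) => .node ((r :: rs).attach.map (fun g => Gm.adj g.1)) [Gm.zero]
  | .node (l :: ls) [] => .node [Gm.zero] ((l :: ls).attach.map (fun g => Gm.adj g.1))
  | .node (l :: ls) (r :: rs) =>
      .node ((r :: rs).attach.map (fun g => Gm.adj g.1))
            ((l :: ls).attach.map (fun g => Gm.adj g.1))
termination_by G => sizeOf G
decreasing_by
  all_goals (have := List.sizeOf_lt_of_mem g.2; simp at this ⊢; omega)


namespace Gm

lemma sizeOf_mem_left {l r : List Gm} {x : Gm} (h : x ∈ l) :
    sizeOf x < sizeOf (Gm.node l r) := by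
  have := List.sizeOf_lt_of_mem h; simp; omega

lemma sizeOf_mem_right {l r : List Gm} {x : Gm} (h : x ∈ r) :
    sizeOf x < sizeOf (Gm.node l r) := by
  have := List.sizeOf_lt_of_mem h; simp; omega

lemma mem_leftOpts_add {g h x : Gm} :
    x ∈ (g.add h).leftOpts ↔
      (∃ gl ∈ g.leftOpts, x = gl.add h) ∨ ∃ hl ∈ h.leftOpts, x = g.add hl := by
  cases g with | node gl gr => ?_
  cases h with | node hl hr => ?_
  rw [Gm.add]
  simp [Gm.leftOpts, eq_comm]

lemma mem_rightOpts_add {g h x : Gm} :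
    x ∈ (g.add h).rightOpts ↔
      (∃ gr ∈ g.rightOpts, x = gr.add h) ∨ ∃ hr ∈ h.rightOpts, x = g.add hr := by
  cases g with | node gl gr => ?_
  cases h with | node hl hr => ?_
  rw [Gm.add]
  simp [Gm.rightOpts, eq_comm]

lemma lwins_iff (G : Gm) :
    G.lwins ↔ G.leftOpts = [] ∨ ∃ g ∈ G.leftOpts, ¬ g.rwins := by
  cases G with | node l r => rw [Gm.lwins]; simp [Gm.leftOpts]

lemma rwins_iff (G : Gm) :
    G.rwins ↔ G.rightOpts = [] ∨ ∃ g ∈ G.rightOpts, ¬ g.lwins := by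
  cases G with | node l r => rw [Gm.rwins]; simp [Gm.rightOpts]

lemma mem_adj_leftOpts {G x : Gm} :
    x ∈ G.adj.leftOpts ↔
      (G.rightOpts = [] ∧ x = Gm.zero) ∨ ∃ r ∈ G.rightOpts, x = r.adj := by
  cases G with | node l r => ?_
  cases l <;> cases r <;> rw [Gm.adj] <;>
    simp [Gm.leftOpts, Gm.rightOpts, Gm.star, eq_comm] <;> aesop

lemma mem_adj_rightOpts {G x : Gm} :
    x ∈ G.adj.rightOpts ↔
      (G.leftOpts = [] ∧ x = Gm.zero) ∨ ∃ l ∈ G.leftOpts, x = l.adj := by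
  cases G with | node l r => ?_
  cases l <;> cases r <;> rw [Gm.adj] <;>
    simp [Gm.leftOpts, Gm.rightOpts, Gm.star, eq_comm] <;> aesop

lemma adj_leftOpts_ne {G : Gm} : G.adj.leftOpts ≠ [] := by
  intro h
  rcases hr : G.rightOpts with _ | ⟨r, rs⟩
  · have : Gm.zero ∈ G.adj.leftOpts := mem_adj_leftOpts.2 (Or.inl ⟨hr, rfl⟩)
    simp [h] at this
  · have : r.adj ∈ G.adj.leftOpts := mem_adj_leftOpts.2 (Or.inr ⟨r, by simp [hr], rfl⟩)
    simp [h] at this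

lemma adj_rightOpts_ne {G : Gm} : G.adj.rightOpts ≠ [] := by
  intro h
  rcases hl : G.leftOpts with _ | ⟨l, ls⟩
  · have : Gm.zero ∈ G.adj.rightOpts := mem_adj_rightOpts.2 (Or.inl ⟨hl, rfl⟩)
    simp [h] at this
  · have : l.adj ∈ G.adj.rightOpts := mem_adj_rightOpts.2 (Or.inr ⟨l, by simp [hl], rfl⟩)
    simp [h] at this

end Gm

namespace Gm

lemma sizeOf_leftOpts {G x : Gm} (h : x ∈ G.leftOpts) : sizeOf x < sizeOf G := by
  cases G with | node l r => exact sizeOf_mem_left h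

lemma sizeOf_rightOpts {G x : Gm} (h : x ∈ G.rightOpts) : sizeOf x < sizeOf G := by
  cases G with | node l r => exact sizeOf_mem_right h

lemma zero_leftOpts : Gm.zero.leftOpts = [] := rfl
lemma zero_rightOpts : Gm.zero.rightOpts = [] := rfl

end Gm

/-- `G + G°` is a misère P-position: the player to move loses. -/
theorem stmt11 (G : Gm) :
    ¬ Gm.lwins (G.add G.adj) ∧ ¬ Gm.rwins (G.add G.adj) := by
  suffices H : ∀ n (G : Gm), sizeOf G < n →
      ¬ Gm.lwins (G.add G.adj) ∧ ¬ Gm.rwins (G.add G.adj) from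
    H (sizeOf G + 1) G (by omega)
  intro n
  induction n with
  | zero => intro G h; omega
  | succ n ih =>
    intro G hG
    constructor
    · rw [Gm.lwins_iff]
      rintro (h | ⟨x, hx, hxr⟩)
      · obtain ⟨y, hy⟩ := List.exists_mem_of_ne_nil _ Gm.adj_leftOpts_ne
        have : G.add y ∈ (G.add G.adj).leftOpts :=
          Gm.mem_leftOpts_add.2 (Or.inr ⟨y, hy, rfl⟩)
        rw [h] at this; simp at this
      · apply hxr
        rcases Gm.mem_leftOpts_add.1 hx with ⟨gl, hgl, rfl⟩ | ⟨al, hal, rfl⟩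
        · refine Gm.rwins_iff _ |>.2 (Or.inr ⟨gl.add gl.adj, ?_, ?_⟩)
          · exact Gm.mem_rightOpts_add.2
              (Or.inr ⟨gl.adj, Gm.mem_adj_rightOpts.2 (Or.inr ⟨gl, hgl, rfl⟩), rfl⟩)
          · exact (ih gl (by have := Gm.sizeOf_leftOpts hgl; omega)).1
        · rcases Gm.mem_adj_leftOpts.1 hal with ⟨hre, rfl⟩ | ⟨gr, hgr, rfl⟩
          · refine Gm.rwins_iff _ |>.2 (Or.inl ?_)
            rw [List.eq_nil_iff_forall_not_mem]
            intro y hy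
            rcases Gm.mem_rightOpts_add.1 hy with ⟨a, ha, rfl⟩ | ⟨a, ha, rfl⟩
            · rw [hre] at ha; simp at ha
            · rw [Gm.zero_rightOpts] at ha; simp at ha
          · refine Gm.rwins_iff _ |>.2 (Or.inr ⟨gr.add gr.adj, ?_, ?_⟩)
            · exact Gm.mem_rightOpts_add.2 (Or.inl ⟨gr, hgr, rfl⟩)
            · exact (ih gr (by have := Gm.sizeOf_rightOpts hgr; omega)).1
    · rw [Gm.rwins_iff]
      rintro (h | ⟨x, hx, hxl⟩)
      · obtain ⟨y, hy⟩ := List.exists_mem_of_ne_nil _ Gm.adj_rightOpts_ne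
        have : G.add y ∈ (G.add G.adj).rightOpts :=
          Gm.mem_rightOpts_add.2 (Or.inr ⟨y, hy, rfl⟩)
        rw [h] at this; simp at this
      · apply hxl
        rcases Gm.mem_rightOpts_add.1 hx with ⟨gr, hgr, rfl⟩ | ⟨ar, har, rfl⟩
        · refine Gm.lwins_iff _ |>.2 (Or.inr ⟨gr.add gr.adj, ?_, ?_⟩)
          · exact Gm.mem_leftOpts_add.2
              (Or.inr ⟨gr.adj, Gm.mem_adj_leftOpts.2 (Or.inr ⟨gr, hgr, rfl⟩), rfl⟩)
          · exact (ih gr (by have := Gm.sizeOf_rightOpts hgr; omega)).2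
        · rcases Gm.mem_adj_rightOpts.1 har with ⟨hle, rfl⟩ | ⟨gl, hgl, rfl⟩
          · refine Gm.lwins_iff _ |>.2 (Or.inl ?_)
            rw [List.eq_nil_iff_forall_not_mem]
            intro y hy
            rcases Gm.mem_leftOpts_add.1 hy with ⟨a, ha, rfl⟩ | ⟨a, ha, rfl⟩
            · rw [hle] at ha; simp at ha
            · rw [Gm.zero_leftOpts] at ha; simp at ha
          · refine Gm.lwins_iff _ |>.2 (Or.inr ⟨gl.add gl.adj, ?_, ?_⟩)
            · exact Gm.mem_leftOpts_add.2 (Or.inl ⟨gl, hgl, rfl⟩)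
            · exact (ih gl (by have := Gm.sizeOf_leftOpts hgl; omega)).2
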